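/- For every continuously differentiable function z : [0,1] → ℝ one has sup_{x∈[0,1]} |z(x)| ≤ 2((∫₀¹ z'(x)² dx)^{1/4}(∫₀¹ z(x)² dx)^{1/4} + (∫₀¹ z(x)² dx)^{1/2}), and moreover 2((∫₀¹ z'² dx)^{1/4}(∫₀¹ z² dx)^{1/4} + (∫₀¹ z² dx)^{1/2}) ≤ 3((∫₀¹ z'² dx)^{1/2} + (∫₀¹ z² dx)^{1/2}). -/

import Mathlib

open Set MeasureTheory

section GNAux
open intervalIntegral

private lemma my_sqrt_add_le {a b : ℝ} (ha : 0 ≤ a) (hb : 0 ≤ b) :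
    Real.sqrt (a + b) ≤ Real.sqrt a + Real.sqrt b := by
  have h1 := Real.sq_sqrt ha
  have h2 := Real.sq_sqrt hb
  have h3 := Real.sqrt_nonneg a
  have h4 := Real.sqrt_nonneg b
  have : a + b ≤ (Real.sqrt a + Real.sqrt b) ^ 2 := by nlinarith
  calc Real.sqrt (a + b) ≤ Real.sqrt ((Real.sqrt a + Real.sqrt b) ^ 2) :=
        Real.sqrt_le_sqrt this
    _ = Real.sqrt a + Real.sqrt b := Real.sqrt_sq (by positivity)

private lemma my_abs_int_le {g : ℝ → ℝ} (hg : Continuous g) {a b : ℝ}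
    (ha : a ∈ Icc (0:ℝ) 1) (hb : b ∈ Icc (0:ℝ) 1) :
    |∫ t in a..b, g t| ≤ ∫ t in (0:ℝ)..1, |g t| := by
  have hgi : IntervalIntegrable (fun t => |g t|) volume (0:ℝ) 1 :=
    (hg.abs).intervalIntegrable _ _
  have hnn : 0 ≤ᵐ[volume.restrict (Ioc (0:ℝ) 1)] fun t => |g t| :=
    Filter.Eventually.of_forall fun t => abs_nonneg _
  rcases le_total a b with h | h
  · exact (abs_integral_le_integral_abs h).trans
      (integral_mono_interval ha.1 h hb.2 hnn hgi)
  · rw [integral_symm, abs_neg]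
    exact (abs_integral_le_integral_abs h).trans
      (integral_mono_interval hb.1 h ha.2 hnn hgi)

private lemma my_cauchy_schwarz {f g : ℝ → ℝ} (hf : Continuous f) (hg : Continuous g) :
    ∫ t in (0:ℝ)..1, |f t * g t| ≤
      Real.sqrt (∫ t in (0:ℝ)..1, f t ^ 2) * Real.sqrt (∫ t in (0:ℝ)..1, g t ^ 2) := by
  set A := ∫ t in (0:ℝ)..1, f t ^ 2 with hAdef
  set B := ∫ t in (0:ℝ)..1, g t ^ 2 with hBdef
  set X := ∫ t in (0:ℝ)..1, |f t * g t| with hXdef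
  have hA : 0 ≤ A := integral_nonneg (by norm_num) fun t _ => sq_nonneg _
  have hB : 0 ≤ B := integral_nonneg (by norm_num) fun t _ => sq_nonneg _
  have hX : 0 ≤ X := integral_nonneg (by norm_num) fun t _ => abs_nonneg _
  have key : ∀ ε : ℝ, 0 < ε → 2 * X ≤ ε * A + B / ε := by
    intro ε hε
    have ptw : ∀ t, 2 * |f t * g t| ≤ ε * f t ^ 2 + g t ^ 2 / ε := by
      intro t
      have e : ε * f t ^ 2 + g t ^ 2 / ε = (ε ^ 2 * f t ^ 2 + g t ^ 2) / ε := by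
        field_simp
      rw [e, le_div_iff₀ hε, abs_mul]
      nlinarith [sq_nonneg (ε * |f t| - |g t|), sq_abs (f t), sq_abs (g t),
        abs_nonneg (f t), abs_nonneg (g t)]
    have h1 : (2:ℝ) * X = ∫ t in (0:ℝ)..1, 2 * |f t * g t| := by
      rw [hXdef, intervalIntegral.integral_const_mul]
    have h2 : (∫ t in (0:ℝ)..1, (ε * f t ^ 2 + g t ^ 2 / ε)) = ε * A + B / ε := by
      rw [integral_add (f := fun t => ε * f t ^ 2) (g := fun t => g t ^ 2 / ε) (((continuous_const.mul (hf.pow 2)).intervalIntegrable _ _))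
          (((hg.pow 2).div_const ε).intervalIntegrable _ _),
        intervalIntegral.integral_const_mul, intervalIntegral.integral_div]
    rw [h1, ← h2]
    exact integral_mono_on (by norm_num)
      (((continuous_const.mul ((hf.mul hg).abs)).intervalIntegrable _ _))
      (((continuous_const.mul (hf.pow 2)).add ((hg.pow 2).div_const ε)).intervalIntegrable _ _)
      fun t _ => ptw t
  rcases eq_or_lt_of_le hA with hA0 | hA0
  · rcases eq_or_lt_of_le hB with hB0 | hB0
    · have := key 1 one_pos
      have hX0 : X ≤ 0 := by rw [← hA0, ← hB0] at this; linarith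
      nlinarith [Real.sqrt_nonneg A, Real.sqrt_nonneg B]
    · -- A = 0
      have hX0 : X ≤ 0 := by
        by_contra h
        push_neg at h
        have := key (B / X) (div_pos hB0 h)
        rw [← hA0] at this
        have e : B / (B / X) = X := by field_simp
        rw [e] at this; linarith
      nlinarith [Real.sqrt_nonneg A, Real.sqrt_nonneg B]
  · rcases eq_or_lt_of_le hB with hB0 | hB0
    · have hX0 : X ≤ 0 := by
        by_contra h
        push_neg at h
        have := key (X / A) (div_pos h hA0)
        rw [← hB0] at this
        have e : X / A * A = X := by field_simp
        rw [e] at this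
        have : (0:ℝ) / (X / A) = 0 := by simp
        linarith [key (X / A) (div_pos h hA0)]
      nlinarith [Real.sqrt_nonneg A, Real.sqrt_nonneg B]
    · have hsA : Real.sqrt A > 0 := Real.sqrt_pos.2 hA0
      have hsB : Real.sqrt B > 0 := Real.sqrt_pos.2 hB0
      have hA2 := Real.mul_self_sqrt hA
      have hB2 := Real.mul_self_sqrt hB
      have hε : (0:ℝ) < Real.sqrt B / Real.sqrt A := div_pos hsB hsA
      have h := key _ hε
      have e : Real.sqrt B / Real.sqrt A * A + B / (Real.sqrt B / Real.sqrt A)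
          = 2 * (Real.sqrt A * Real.sqrt B) := by
        field_simp
        nlinarith
      rw [e] at h
      linarith

end GNAux
open intervalIntegral in

/-- Gagliardo–Nirenberg interpolation inequality on the unit interval
(Lemma 3.1, first part). -/
theorem gagliardo_nirenberg_unit_interval (z : ℝ → ℝ) (hz : ContDiff ℝ 1 z) :
    (∀ x ∈ Icc (0:ℝ) 1,
      |z x| ≤ 2 * ((∫ y in (0:ℝ)..1, (deriv z y)^2) ^ ((1:ℝ)/4) *
        (∫ y in (0:ℝ)..1, (z y)^2) ^ ((1:ℝ)/4) +
        (∫ y in (0:ℝ)..1, (z y)^2) ^ ((1:ℝ)/2))) ∧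
    2 * ((∫ y in (0:ℝ)..1, (deriv z y)^2) ^ ((1:ℝ)/4) *
        (∫ y in (0:ℝ)..1, (z y)^2) ^ ((1:ℝ)/4) +
        (∫ y in (0:ℝ)..1, (z y)^2) ^ ((1:ℝ)/2)) ≤
      3 * ((∫ y in (0:ℝ)..1, (deriv z y)^2) ^ ((1:ℝ)/2) +
        (∫ y in (0:ℝ)..1, (z y)^2) ^ ((1:ℝ)/2)) := by
  have hc : Continuous z := hz.continuous
  have hc' : Continuous (deriv z) := hz.continuous_deriv le_rfl
  set A := ∫ y in (0:ℝ)..1, (deriv z y)^2 with hAdef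
  set B := ∫ y in (0:ℝ)..1, (z y)^2 with hBdef
  have hA : 0 ≤ A := integral_nonneg (by norm_num) fun t _ => sq_nonneg _
  have hB : 0 ≤ B := integral_nonneg (by norm_num) fun t _ => sq_nonneg _
  -- quarter powers
  have hq : ∀ {C : ℝ}, 0 ≤ C → Real.sqrt (Real.sqrt C) = C ^ ((1:ℝ)/4) := by
    intro C hC
    rw [Real.sqrt_eq_rpow, Real.sqrt_eq_rpow, ← Real.rpow_mul hC]
    norm_num
  have hh : ∀ (C : ℝ), C ^ ((1:ℝ)/2) = Real.sqrt C := fun C =>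
    (Real.sqrt_eq_rpow C).symm
  constructor
  · -- main inequality
    obtain ⟨y₀, hy₀, hmin'⟩ := isCompact_Icc.exists_isMinOn
      (⟨0, by norm_num⟩ : (Icc (0:ℝ) 1).Nonempty)
      ((hc.pow 2).continuousOn : ContinuousOn (fun y => z y ^ 2) (Icc (0:ℝ) 1))
    have hmin : ∀ y ∈ Icc (0:ℝ) 1, z y₀ ^ 2 ≤ z y ^ 2 := fun y hy => hmin' hy
    have hy₀B : z y₀ ^ 2 ≤ B := by
      have h1 : (∫ y in (0:ℝ)..1, z y₀ ^ 2) ≤ B :=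
        integral_mono_on (by norm_num) (intervalIntegrable_const)
          ((hc.pow 2).intervalIntegrable _ _) (fun y hy => hmin y hy)
      simpa using h1
    have hgc : Continuous (fun t => 2 * z t * deriv z t) :=
      (continuous_const.mul hc).mul hc'
    have habs : ∀ x ∈ Icc (0:ℝ) 1, z x ^ 2 ≤ B + 2 * (Real.sqrt B * Real.sqrt A) := by
      intro x hx
      have ftc : (∫ t in y₀..x, 2 * z t * deriv z t) = z x ^ 2 - z y₀ ^ 2 := by
        apply intervalIntegral.integral_eq_sub_of_hasDerivAt
        · intro t ht
          have : HasDerivAt (fun x => z x ^ 2) _ t := ((hz.differentiable (by norm_num)) t).hasDerivAt.pow 2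
          simpa [mul_comm, mul_assoc, mul_left_comm] using this
        · exact hgc.intervalIntegrable _ _
      have h2 : |∫ t in y₀..x, 2 * z t * deriv z t| ≤
          ∫ t in (0:ℝ)..1, |2 * z t * deriv z t| := my_abs_int_le hgc hy₀ hx
      have h3 : (∫ t in (0:ℝ)..1, |2 * z t * deriv z t|) =
          2 * ∫ t in (0:ℝ)..1, |z t * deriv z t| := by
        rw [← intervalIntegral.integral_const_mul]
        apply intervalIntegral.integral_congr
        intro t _
        show |2 * z t * deriv z t| = 2 * |z t * deriv z t|
        rw [mul_assoc, abs_mul]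
        norm_num
      have h4 := my_cauchy_schwarz hc hc'
      have h5 := le_abs_self (∫ t in y₀..x, 2 * z t * deriv z t)
      nth_rewrite 1 [ftc] at h5
      rw [h3] at h2
      linarith
    intro x hx
    have h5 := habs x hx
    have h6 : |z x| = Real.sqrt (z x ^ 2) := (Real.sqrt_sq_eq_abs _).symm
    have hq4A : (0:ℝ) ≤ A ^ ((1:ℝ)/4) := Real.rpow_nonneg hA _
    have hq4B : (0:ℝ) ≤ B ^ ((1:ℝ)/4) := Real.rpow_nonneg hB _
    rw [h6]
    calc Real.sqrt (z x ^ 2) ≤ Real.sqrt (B + 2 * (Real.sqrt B * Real.sqrt A)) :=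
          Real.sqrt_le_sqrt h5
      _ ≤ Real.sqrt B + Real.sqrt (2 * (Real.sqrt B * Real.sqrt A)) :=
          my_sqrt_add_le hB (by positivity)
      _ ≤ 2 * (A ^ ((1:ℝ)/4) * B ^ ((1:ℝ)/4) + B ^ ((1:ℝ)/2)) := by
          have e : Real.sqrt (2 * (Real.sqrt B * Real.sqrt A)) =
              Real.sqrt 2 * (Real.sqrt (Real.sqrt B) * Real.sqrt (Real.sqrt A)) := by
            rw [Real.sqrt_mul (by norm_num), Real.sqrt_mul (Real.sqrt_nonneg _)]
          rw [e, hq hA, hq hB, hh B]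
          have hs2 : Real.sqrt 2 ≤ 2 := by
            nlinarith [Real.sq_sqrt (by norm_num : (0:ℝ) ≤ 2), Real.sqrt_nonneg 2]
          have hs2n : (0:ℝ) ≤ Real.sqrt 2 := Real.sqrt_nonneg 2
          nlinarith [mul_nonneg hq4A hq4B, Real.sqrt_nonneg B]
  · -- comparison of the two right-hand sides
    have hq4A : (0:ℝ) ≤ A ^ ((1:ℝ)/4) := Real.rpow_nonneg hA _
    have hq4B : (0:ℝ) ≤ B ^ ((1:ℝ)/4) := Real.rpow_nonneg hB _
    have eA : A ^ ((1:ℝ)/2) = (A ^ ((1:ℝ)/4)) ^ 2 := by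
      rw [← Real.rpow_natCast (A ^ ((1:ℝ)/4)) 2, ← Real.rpow_mul hA]
      norm_num
    have eB : B ^ ((1:ℝ)/2) = (B ^ ((1:ℝ)/4)) ^ 2 := by
      rw [← Real.rpow_natCast (B ^ ((1:ℝ)/4)) 2, ← Real.rpow_mul hB]
      norm_num
    rw [eA, eB]
    nlinarith [sq_nonneg (A ^ ((1:ℝ)/4) - B ^ ((1:ℝ)/4))]
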